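/- With Σ_m := Σ₀ − Σ₀ Aᵀ S_m S_mᵀ A Σ₀ where Σ₀ is symmetric positive definite, A invertible, and S_mᵀ (A Σ₀ Aᵀ) S_m = I_m with S_m of full column rank m, the rank of Σ_m equals d − m. -/

import Mathlib

open Matrix

lemma aux_rank_one_sub {n : ℕ} (P : Matrix (Fin n) (Fin n) ℝ) (hP : P * P = P) :
    (1 - P).rank = n - P.rank := by
  have hrange : LinearMap.range (1 - P).mulVecLin = LinearMap.ker P.mulVecLin := by
    ext x
    constructor
    · rintro ⟨y, rfl⟩
      simp [sub_mulVec, one_mulVec, mulVec_sub, mulVec_mulVec, hP]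
    · intro hx
      refine ⟨x, ?_⟩
      simp only [LinearMap.mem_ker, mulVecLin_apply] at hx
      simp [sub_mulVec, one_mulVec, hx]
  have h := LinearMap.finrank_range_add_finrank_ker P.mulVecLin
  simp only [Module.finrank_fin_fun] at h
  rw [Matrix.rank, Matrix.rank, hrange]
  omega

theorem stmt_13 {d m : ℕ} (hm : m ≤ d) (A Sig0 : Matrix (Fin d) (Fin d) ℝ)
    (hA : IsUnit A.det) (hSig0 : Sig0.PosDef)
    (S : Matrix (Fin d) (Fin m) ℝ) (hS : Sᵀ * (A * Sig0 * Aᵀ) * S = 1)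
    (hrank : S.rank = m) :
    (Sig0 - Sig0 * Aᵀ * S * Sᵀ * A * Sig0).rank = d - m := by
  classical
  have hBps : (A * Sig0 * Aᵀ).PosSemidef := by
    have := hSig0.posSemidef.mul_mul_conjTranspose_same A
    simpa [conjTranspose_eq_transpose_of_trivial] using this
  obtain ⟨N, hNsym, hNN⟩ : ∃ N : Matrix (Fin d) (Fin d) ℝ,
      Nᵀ = N ∧ N * N = A * Sig0 * Aᵀ :=
    open scoped MatrixOrder in
    ⟨CFC.sqrt (A * Sig0 * Aᵀ), by
      open scoped MatrixOrder in
      have := (Matrix.nonneg_iff_posSemidef.mp (CFC.sqrt_nonneg (A * Sig0 * Aᵀ))).1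
      rwa [IsHermitian, conjTranspose_eq_transpose_of_trivial] at this,
      CFC.sqrt_mul_sqrt_self _ (Matrix.nonneg_iff_posSemidef.mpr hBps)⟩
  have hSig0sym : Sig0ᵀ = Sig0 := by
    have := hSig0.isHermitian
    rwa [IsHermitian, conjTranspose_eq_transpose_of_trivial] at this
  have hSig0det : IsUnit Sig0.det := hSig0.det_pos.ne'.isUnit
  have hAtdet : IsUnit Aᵀ.det := by rwa [det_transpose]
  have hBdet : IsUnit (A * Sig0 * Aᵀ).det := by
    rw [det_mul, det_mul]
    exact (hA.mul hSig0det).mul hAtdet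
  have hNdet : IsUnit N.det := by
    have h2 : N.det * N.det = (A * Sig0 * Aᵀ).det := by rw [← det_mul, hNN]
    have hne : N.det ≠ 0 := fun h => hBdet.ne_zero (by rw [← h2, h, mul_zero])
    exact hne.isUnit
  have hNinvdet : IsUnit N⁻¹.det := isUnit_nonsing_inv_det N hNdet
  -- T = N * S has orthonormal columns
  have hT : (N * S)ᵀ * (N * S) = 1 := by
    rw [transpose_mul, hNsym, Matrix.mul_assoc, ← Matrix.mul_assoc N N S, hNN,
      ← Matrix.mul_assoc, hS]
  have hPP : ((N * S) * (N * S)ᵀ) * ((N * S) * (N * S)ᵀ) = (N * S) * (N * S)ᵀ := by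
    calc (N * S) * (N * S)ᵀ * ((N * S) * (N * S)ᵀ)
        = (N * S) * (((N * S)ᵀ * (N * S)) * (N * S)ᵀ) := by
          simp only [Matrix.mul_assoc]
    _ = (N * S) * (N * S)ᵀ := by rw [hT, Matrix.one_mul]
  -- inverse of N squared
  have hNinv2 : N⁻¹ * N⁻¹ = Aᵀ⁻¹ * (Sig0⁻¹ * A⁻¹) := by
    have h1 : (A * Sig0 * Aᵀ) * (N⁻¹ * N⁻¹) = 1 := by
      rw [← hNN]
      calc N * N * (N⁻¹ * N⁻¹) = N * ((N * N⁻¹) * N⁻¹) := by simp only [Matrix.mul_assoc]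
      _ = 1 := by rw [mul_nonsing_inv N hNdet, Matrix.one_mul, mul_nonsing_inv N hNdet]
    have e1 := inv_eq_right_inv h1
    rw [← e1, Matrix.mul_inv_rev, Matrix.mul_inv_rev]
  have hterm1 : (Sig0 * Aᵀ * N⁻¹) * (N⁻¹ * A * Sig0) = Sig0 := by
    calc (Sig0 * Aᵀ * N⁻¹) * (N⁻¹ * A * Sig0)
        = Sig0 * (Aᵀ * ((N⁻¹ * N⁻¹) * (A * Sig0))) := by simp only [Matrix.mul_assoc]
    _ = Sig0 * (Aᵀ * (Aᵀ⁻¹ * (Sig0⁻¹ * A⁻¹ * (A * Sig0)))) := by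
          rw [hNinv2]; simp only [Matrix.mul_assoc]
    _ = Sig0 * (Sig0⁻¹ * A⁻¹ * (A * Sig0)) := by
          rw [mul_nonsing_inv_cancel_left Aᵀ _ hAtdet]
    _ = Sig0 * (Sig0⁻¹ * Sig0) := by
          rw [Matrix.mul_assoc Sig0⁻¹, nonsing_inv_mul_cancel_left A _ hA]
    _ = Sig0 := by rw [nonsing_inv_mul Sig0 hSig0det, Matrix.mul_one]
  have hterm2 : (Sig0 * Aᵀ * N⁻¹) * ((N * S) * (N * S)ᵀ * (N⁻¹ * A * Sig0))
      = Sig0 * Aᵀ * S * Sᵀ * A * Sig0 := by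
    rw [transpose_mul, hNsym]
    calc (Sig0 * Aᵀ * N⁻¹) * (N * S * (Sᵀ * N) * (N⁻¹ * A * Sig0))
        = Sig0 * (Aᵀ * (N⁻¹ * (N * (S * (Sᵀ * (N * (N⁻¹ * (A * Sig0)))))))) := by
          simp only [Matrix.mul_assoc]
    _ = Sig0 * (Aᵀ * (S * (Sᵀ * (A * Sig0)))) := by
          rw [nonsing_inv_mul_cancel_left N _ hNdet, mul_nonsing_inv_cancel_left N _ hNdet]
    _ = Sig0 * Aᵀ * S * Sᵀ * A * Sig0 := by simp only [Matrix.mul_assoc]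
  have hfact : Sig0 - Sig0 * Aᵀ * S * Sᵀ * A * Sig0
      = (Sig0 * Aᵀ * N⁻¹) * ((1 - (N * S) * (N * S)ᵀ) * (N⁻¹ * A * Sig0)) := by
    rw [Matrix.sub_mul, Matrix.one_mul, Matrix.mul_sub, hterm1, hterm2]
  have hMtdet : IsUnit (Sig0 * Aᵀ * N⁻¹).det := by
    rw [det_mul, det_mul]
    exact (hSig0det.mul hAtdet).mul hNinvdet
  have hMdet : IsUnit (N⁻¹ * A * Sig0).det := by
    rw [det_mul, det_mul]
    exact (hNinvdet.mul hA).mul hSig0det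
  rw [hfact, rank_mul_eq_right_of_isUnit_det _ _ hMtdet,
    rank_mul_eq_left_of_isUnit_det _ _ hMdet, aux_rank_one_sub _ hPP]
  congr 1
  rw [rank_self_mul_transpose, rank_mul_eq_right_of_isUnit_det N S hNdet, hrank]
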